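/- Let V be an n-dimensional vector space over the Galois field GF(q), where q = p^m with p prime, and let k be a multiple of p with 2 < k < q^n. Let B be the family of all k-element subsets of V whose elements sum to zero. Then (V, B) is a 2-(q^n, k, λ) design: there is a constant λ such that every pair of distinct vectors of V is contained in exactly λ members of B. -/

import Mathlib

open Finset

/-- Any nonzero vector can be mapped to any nonzero vector by a linear automorphism. -/
lemma exists_linearEquiv_map_eq {K V : Type*} [Field K] [AddCommGroup V] [Module K V]
    {v w : V} (hv : v ≠ 0) (hw : w ≠ 0) : ∃ L : V ≃ₗ[K] V, L v = w := by
  classical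
  have h1 : LinearIndepOn K id ({v} : Set V) := LinearIndepOn.singleton hv
  have h2 : LinearIndepOn K id ({w} : Set V) := LinearIndepOn.singleton hw
  let b1 := Module.Basis.extend h1
  let b2 := Module.Basis.extend h2
  have hv' : v ∈ h1.extend (Set.subset_univ _) := h1.subset_extend _ rfl
  have hw' : w ∈ h2.extend (Set.subset_univ _) := h2.subset_extend _ rfl
  let e0 := b1.indexEquiv b2
  let e := e0.trans (Equiv.swap (e0 ⟨v, hv'⟩) ⟨w, hw'⟩)
  refine ⟨b1.equiv b2 e, ?_⟩
  have h3 : b1 ⟨v, hv'⟩ = v := Module.Basis.extend_apply_self h1 ⟨v, hv'⟩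
  have h4 : b2 ⟨w, hw'⟩ = w := Module.Basis.extend_apply_self h2 ⟨w, hw'⟩
  have h5 : (b1.equiv b2 e) (b1 ⟨v, hv'⟩) = w := by
    rw [Module.Basis.equiv_apply]
    show b2 (Equiv.swap (e0 ⟨v, hv'⟩) ⟨w, hw'⟩ (e0 ⟨v, hv'⟩)) = w
    rw [Equiv.swap_apply_left]
    exact h4
  rw [h3] at h5
  exact h5

theorem stmt_8 (F : Type*) [Field F] [Fintype F] [DecidableEq F]
    (p m : ℕ) (hp : p.Prime) (hcard : Fintype.card F = p ^ m)
    (n k : ℕ) (hpk : p ∣ k) (h2 : 2 < k) (hlt : k < Fintype.card F ^ n) :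
    ∃ lam : ℕ, ∀ x y : Fin n → F, x ≠ y →
      (Finset.univ.filter (fun s : Finset (Fin n → F) =>
        s.card = k ∧ (∑ w ∈ s, w) = 0 ∧ x ∈ s ∧ y ∈ s)).card = lam := by
  classical
  set V := Fin n → F
  -- characteristic
  obtain ⟨n', hq', hcard'⟩ := FiniteField.card F (ringChar F)
  have hm : m ≠ 0 := by
    rintro rfl
    rw [pow_zero] at hcard
    have := Fintype.one_lt_card (α := F)
    omega
  have hpq : p = ringChar F := by
    have hdvd : p ∣ ringChar F ^ (n' : ℕ) := by
      rw [← hcard', hcard]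
      exact dvd_pow_self p hm
    exact (Nat.prime_dvd_prime_iff_eq hp hq').1 (hp.dvd_of_dvd_pow hdvd)
  have hkF : (k : F) = 0 := by
    rw [(CharP.cast_eq_zero_iff F (ringChar F) k)]
    exact hpq ▸ hpk
  have hsmul : ∀ b : V, k • b = 0 := by
    intro b
    rw [← Nat.cast_smul_eq_nsmul F, hkF, zero_smul]
  -- count function
  set cnt : V → V → ℕ := fun x y =>
    (Finset.univ.filter (fun s : Finset V =>
      s.card = k ∧ (∑ w ∈ s, w) = 0 ∧ x ∈ s ∧ y ∈ s)).card with hcnt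
  -- key monotonicity: for any two distinct pairs, cnt x₀ y₀ ≤ cnt x y
  have key : ∀ x₀ y₀ x y : V, x₀ ≠ y₀ → x ≠ y → cnt x₀ y₀ ≤ cnt x y := by
    intro x₀ y₀ x y h0 hxy
    obtain ⟨L, hL⟩ := exists_linearEquiv_map_eq (K := F)
      (sub_ne_zero.2 (Ne.symm h0)) (sub_ne_zero.2 (Ne.symm hxy))
    set e : V ≃ V :=
      ((Equiv.subRight x₀).trans L.toEquiv).trans (Equiv.addRight x) with he
    have heapp : ∀ w : V, e w = L (w - x₀) + x := fun w => rfl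
    have hex : e x₀ = x := by simp [heapp]
    have hey : e y₀ = y := by
      rw [heapp, hL]; abel
    apply Finset.card_le_card_of_injOn (fun s => s.map e.toEmbedding)
    · intro s hs
      simp only [Finset.mem_coe, Finset.mem_filter, Finset.mem_univ, true_and] at hs ⊢
      obtain ⟨hcard, hsum, hx0, hy0⟩ := hs
      refine ⟨by simp [hcard], ?_, ?_, ?_⟩
      · rw [Finset.sum_map]
        have : ∑ w ∈ s, e w = L (∑ w ∈ s, w) := by
          calc ∑ w ∈ s, e w = ∑ w ∈ s, (L (w - x₀) + x) := by simp [heapp]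
            _ = (∑ w ∈ s, L (w - x₀)) + s.card • x := by
                rw [Finset.sum_add_distrib, Finset.sum_const]
            _ = L ((∑ w ∈ s, w) - s.card • x₀) + s.card • x := by
                rw [← map_sum, Finset.sum_sub_distrib, Finset.sum_const]
            _ = L (∑ w ∈ s, w) := by
                rw [hcard, hsmul, hsmul, sub_zero, add_zero]
        simp [this, hsum]
      · exact Finset.mem_map.2 ⟨x₀, hx0, hex⟩
      · exact Finset.mem_map.2 ⟨y₀, hy0, hey⟩
    · intro s _ t _ hst
      exact Finset.map_injective _ hst
  -- pick a reference pair
  have h1V : 1 < Fintype.card V := by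
    have : Fintype.card V = Fintype.card F ^ n := by
      simp [V, Fintype.card_fun]
    omega
  obtain ⟨x₀, y₀, h0⟩ := Fintype.exists_pair_of_one_lt_card h1V
  exact ⟨cnt x₀ y₀, fun x y hxy =>
    le_antisymm (key x y x₀ y₀ hxy h0) (key x₀ y₀ x y h0 hxy)⟩
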